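/- Let $H$ be a Hilbert space, $1\le p<\infty$ and $0<T<\infty$. If $v:[0,T]\to H$ is continuous and has finite $p$-variation norm $\|v\|_{V^p(0,T;H)}$, then for every $h$ with $0<h<T$ one has $\big(\int_0^{T-h}\|v(t+h)-v(t)\|_H^p\,dt\big)^{1/p}\le 2^{1+1/p}\,h^{1/p}\,\|v\|_{V^p(0,T;H)}$. -/
import Mathlib


open MeasureTheory ENNReal

/-- The `p`-variation norm of `v : ℝ → H` on the interval `[a, b]`, valued in `ℝ≥0∞`:
the supremum over all finite partitions `a ≤ t 0 < t 1 < ⋯ < t K ≤ b` of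
`(∑_{k<K} ‖v (t (k+1)) - v (t k)‖ ^ p) ^ (1/p)`. -/
noncomputable def pVariationNorm {H : Type*} [NormedAddCommGroup H]
    (p a b : ℝ) (v : ℝ → H) : ℝ≥0∞ :=
  ⨆ (K : ℕ) (t : ℕ → ℝ) (_ : StrictMonoOn t (Set.Iic K))
      (_ : ∀ k ≤ K, t k ∈ Set.Icc a b),
    (∑ k ∈ Finset.range K, (‖v (t (k + 1)) - v (t k)‖₊ : ℝ≥0∞) ^ p) ^ (1 / p)

/-- Key partition bound: the sum of `p`-th powers of increments along the lattice
`s, s+h, s+2h, …` inside `[0,T]` is bounded by `(pVariationNorm p 0 T v)^p`. -/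
lemma sum_lattice_le {H : Type*} [NormedAddCommGroup H]
    (p T : ℝ) (hp : 1 ≤ p) (v : ℝ → H) (hfin : pVariationNorm p 0 T v ≠ ⊤)
    (h : ℝ) (hh0 : 0 < h)
    (s : ℝ) (K : ℕ) (hs : 0 ≤ s) (hsK : s + K * h ≤ T) :
    ∑ k ∈ Finset.range K, ‖v (s + k * h + h) - v (s + k * h)‖ ^ p
      ≤ ((pVariationNorm p 0 T v) ^ p).toReal := by
  have hp0 : (0:ℝ) < p := lt_of_lt_of_le one_pos hp
  set t : ℕ → ℝ := fun k => s + k * h with ht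
  have hmono : StrictMonoOn t (Set.Iic K) := by
    intro x _ y _ hxy
    have hxy' : (x:ℝ) < y := Nat.cast_lt.2 hxy
    simp only [ht]
    nlinarith
  have hmem : ∀ k ≤ K, t k ∈ Set.Icc 0 T := by
    intro k hk
    have hk' : (k:ℝ) ≤ K := Nat.cast_le.2 hk
    constructor
    · simp only [ht]; positivity
    · simp only [ht]; nlinarith
  have key : (∑ k ∈ Finset.range K, (‖v (t (k + 1)) - v (t k)‖₊ : ℝ≥0∞) ^ p) ^ (1 / p)
      ≤ pVariationNorm p 0 T v :=
    le_iSup_of_le K <| le_iSup_of_le t <| le_iSup_of_le hmono <| le_iSup_of_le hmem le_rfl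
  have key2 : (∑ k ∈ Finset.range K, (‖v (t (k + 1)) - v (t k)‖₊ : ℝ≥0∞) ^ p)
      ≤ (pVariationNorm p 0 T v) ^ p := by
    have h2 := ENNReal.rpow_le_rpow key hp0.le
    rwa [← ENNReal.rpow_mul, one_div_mul_cancel hp0.ne', ENNReal.rpow_one] at h2
  have hterm : ∀ k ∈ Finset.range K,
      ((‖v (t (k + 1)) - v (t k)‖₊ : ℝ≥0∞) ^ p) ≠ ⊤ :=
    fun k _ => ENNReal.rpow_ne_top_of_nonneg hp0.le ENNReal.coe_ne_top
  have heq : ∑ k ∈ Finset.range K, ‖v (s + k * h + h) - v (s + k * h)‖ ^ p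
      = (∑ k ∈ Finset.range K, (‖v (t (k + 1)) - v (t k)‖₊ : ℝ≥0∞) ^ p).toReal := by
    rw [ENNReal.toReal_sum hterm]
    refine Finset.sum_congr rfl fun k _ => ?_
    rw [← ENNReal.toReal_rpow, ENNReal.coe_toReal, coe_nnnorm]
    congr 2 <;> simp only [ht] <;> push_cast <;> ring
  rw [heq]
  exact ENNReal.toReal_mono (ENNReal.rpow_ne_top_of_nonneg hp0.le hfin) key2

/-- the time-shift estimate for continuous functions of finite `p`-variation:
`(∫_0^{T-h} ‖v(t+h) - v(t)‖^p dt)^{1/p} ≤ 2^{1+1/p} h^{1/p} ‖v‖_{V^p(0,T;H)}`. -/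
theorem stmt0 {H : Type*} [NormedAddCommGroup H] [InnerProductSpace ℂ H] [CompleteSpace H]
    (p T : ℝ) (hp : 1 ≤ p) (hT : 0 < T)
    (v : ℝ → H) (hv : ContinuousOn v (Set.Icc 0 T))
    (hfin : pVariationNorm p 0 T v ≠ ⊤)
    (h : ℝ) (hh0 : 0 < h) (hhT : h < T) :
    (∫ t in (0:ℝ)..(T - h), ‖v (t + h) - v t‖ ^ p) ^ (1 / p)
      ≤ 2 ^ (1 + 1 / p) * h ^ (1 / p) * (pVariationNorm p 0 T v).toReal := by
  have hp0 : (0:ℝ) < p := lt_of_lt_of_le one_pos hp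
  set L : ℝ := T - h with hLdef
  have hL0 : 0 < L := by simp only [hLdef]; linarith
  set V : ℝ≥0∞ := pVariationNorm p 0 T v with hVdef
  set Vp : ℝ := (V ^ p).toReal with hVpdef
  have hVp0 : 0 ≤ Vp := ENNReal.toReal_nonneg
  set f : ℝ → ℝ := fun t => ‖v (t + h) - v t‖ ^ p with hfdef
  have hfnn : ∀ t, 0 ≤ f t := fun t => Real.rpow_nonneg (norm_nonneg _) p
  -- continuity of f on [0, L]
  have hfc : ContinuousOn f (Set.Icc 0 L) := by
    apply ContinuousOn.rpow_const
    · apply ContinuousOn.norm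
      apply ContinuousOn.sub
      · refine hv.comp (continuous_add_right h).continuousOn fun t ht => ?_
        simp only [Set.mem_Icc, hLdef] at ht ⊢
        constructor
        · linarith [ht.1, hh0.le]
        · linarith [ht.2]
      · exact hv.mono (Set.Icc_subset_Icc le_rfl (by linarith))
    · exact fun x _ => Or.inr hp0.le
  set N : ℕ := ⌈L / h⌉₊ with hNdef
  have hLN : L ≤ N * h := by
    have h1 := Nat.le_ceil (L / h)
    calc L = (L / h) * h := by field_simp
      _ ≤ N * h := mul_le_mul_of_nonneg_right h1 hh0.le
  set a : ℕ → ℝ := fun j => min (j * h) L with hadef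
  have ha0' : ∀ j, 0 ≤ a j := fun j => le_min (by positivity) hL0.le
  have haL : ∀ j, a j ≤ L := fun j => min_le_right _ _
  have hamono : Monotone a := by
    intro x y hxy
    exact min_le_min (mul_le_mul_of_nonneg_right (Nat.cast_le.2 hxy) hh0.le) le_rfl
  have ha0 : a 0 = 0 := by simp [hadef, hL0.le]
  have haN : a N = L := min_eq_right hLN
  have hintj : ∀ j, IntervalIntegrable f volume (a j) (a (j + 1)) := by
    intro j
    apply ContinuousOn.intervalIntegrable
    apply hfc.mono
    rw [Set.uIcc_of_le (hamono (Nat.le_succ j))]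
    exact Set.Icc_subset_Icc (ha0' j) (haL (j + 1))
  set e : ℕ → ℝ → ℝ := fun j =>
    (Set.Ioc (a j - j * h) (a (j + 1) - j * h)).indicator (fun u => f (u + j * h)) with hedef
  -- integrability of the shifted pieces
  have hshift_int : ∀ j : ℕ, IntegrableOn (fun u => f (u + j * h))
      (Set.Ioc (a j - j * h) (a (j + 1) - j * h)) volume := by
    intro j
    have hcont : ContinuousOn (fun u => f (u + j * h))
        (Set.Icc (a j - j * h) (a (j + 1) - j * h)) := by
      apply hfc.comp (continuous_add_right ((j:ℝ) * h)).continuousOn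
      intro u hu
      simp only [Set.mem_Icc] at hu ⊢
      constructor
      · linarith [ha0' j, hu.1]
      · linarith [haL (j + 1), hu.2]
    exact (hcont.integrableOn_Icc).mono_set Set.Ioc_subset_Icc_self
  have hej_int : ∀ j, IntervalIntegrable (e j) volume 0 h := fun j =>
    ((hshift_int j).integrable_indicator measurableSet_Ioc).intervalIntegrable
  -- step 1: decompose the integral into pieces
  have step1 : ∫ t in (0:ℝ)..L, f t = ∑ j ∈ Finset.range N, ∫ t in (a j)..(a (j + 1)), f t := by
    rw [intervalIntegral.sum_integral_adjacent_intervals (fun k _ => hintj k), ha0, haN]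
  -- step 2: each piece equals the integral of the indicator over [0, h]
  have step2 : ∀ j, ∫ t in (a j)..(a (j + 1)), f t = ∫ s in (0:ℝ)..h, e j s := by
    intro j
    have hRHS : ∫ s in (0:ℝ)..h, e j s
        = ∫ s in Set.Ioc 0 h ∩ Set.Ioc (a j - j * h) (a (j + 1) - j * h), f (s + j * h) := by
      rw [intervalIntegral.integral_of_le hh0.le, setIntegral_indicator measurableSet_Ioc]
    rcases le_or_gt ((j:ℝ) * h) L with hjL | hjL
    · have hc : a j = (j:ℝ) * h := min_eq_left hjL
      have hd0 : (0:ℝ) ≤ a (j + 1) - j * h := by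
        have := hamono (Nat.le_succ j); rw [hc] at this; linarith
      have hdh : a (j + 1) - j * h ≤ h := by
        have h1 : a (j + 1) ≤ ((j:ℕ) + 1 : ℕ) * h := min_le_left _ _
        push_cast at h1; linarith
      rw [hRHS]
      have hc0 : a j - (j:ℝ) * h = 0 := by rw [hc]; ring
      have hinter : Set.Ioc 0 h ∩ Set.Ioc (a j - j * h) (a (j + 1) - j * h)
          = Set.Ioc (a j - j * h) (a (j + 1) - j * h) := by
        rw [Set.Ioc_inter_Ioc, hc0]
        simp [inf_eq_right.2 hdh]
      rw [hinter, ← intervalIntegral.integral_of_le (by rw [hc0]; exact hd0),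
        intervalIntegral.integral_comp_add_right f ((j:ℝ) * h)]
      congr 1 <;> ring
    · have hc : a j = L := min_eq_right hjL.le
      have hc1 : a (j + 1) = L := by
        apply min_eq_right
        have h1 : (j:ℝ) * h ≤ ((j:ℕ) + 1 : ℕ) * h := by push_cast; nlinarith
        linarith
      rw [hRHS, hc, hc1]
      simp [intervalIntegral.integral_same]
  -- step 3: interchange sum and integral
  have step3 : ∑ j ∈ Finset.range N, ∫ s in (0:ℝ)..h, e j s
      = ∫ s in (0:ℝ)..h, ∑ j ∈ Finset.range N, e j s :=
    (intervalIntegral.integral_finset_sum (fun j _ => hej_int j)).symm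
  -- pointwise bound
  have hpt : ∀ s ∈ Set.Icc (0:ℝ) h, ∑ j ∈ Finset.range N, e j s ≤ Vp := by
    rintro s ⟨hs0, hsh⟩
    rcases eq_or_lt_of_le hs0 with hs0' | hs0'
    · -- s = 0
      rw [Finset.sum_eq_zero]
      · exact hVp0
      intro j _
      apply Set.indicator_of_notMem
      rintro ⟨h1, h2⟩
      rcases le_or_gt ((j:ℝ) * h) L with hjL | hjL
      · have hc : a j = (j:ℝ) * h := min_eq_left hjL
        rw [hc, sub_self] at h1
        linarith
      · have hc1 : a (j + 1) = L := by
          apply min_eq_right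
          have : ((j:ℕ) + 1 : ℕ) * h = (j:ℝ) * h + h := by push_cast; ring
          rw [this]; linarith
        rw [hc1] at h2
        linarith
    · -- 0 < s
      rcases le_or_gt s L with hsL | hsL
      · -- s ≤ L : the main case
        set K : ℕ := ⌊(L - s) / h⌋₊ + 1 with hKdef
        have hdivnn : 0 ≤ (L - s) / h := div_nonneg (by linarith) hh0.le
        have hKN : K ≤ N := by
          have h1 : ((⌊(L - s) / h⌋₊ : ℝ)) < (N : ℝ) := by
            calc ((⌊(L - s) / h⌋₊ : ℝ)) ≤ (L - s) / h := Nat.floor_le hdivnn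
              _ < L / h := by rw [div_lt_div_iff₀ hh0 hh0]; nlinarith
              _ ≤ N := Nat.le_ceil _
          have h2 : ⌊(L - s) / h⌋₊ < N := Nat.cast_lt.1 h1
          omega
        have hcrit : ∀ j : ℕ, (s + (j:ℝ) * h ≤ L ↔ j < K) := by
          intro j
          rw [hKdef, Nat.lt_add_one_iff, Nat.le_floor_iff hdivnn, le_div_iff₀ hh0]
          constructor <;> intro <;> linarith
        have hsum : ∑ j ∈ Finset.range N, e j s = ∑ j ∈ Finset.range K, f (s + j * h) := by
          have hterm : ∀ j ∈ Finset.range N, e j s = if j < K then f (s + j * h) else 0 := by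
            intro j _
            by_cases hjK : j < K
            · rw [if_pos hjK]
              have hle : s + (j:ℝ) * h ≤ L := (hcrit j).2 hjK
              have hjL : (j:ℝ) * h ≤ L := by linarith
              apply Set.indicator_of_mem
              have hc : a j = (j:ℝ) * h := min_eq_left hjL
              have hc1 : a (j + 1) = min ((((j:ℕ) + 1 : ℕ)) * h : ℝ) L := rfl
              constructor
              · rw [hc, sub_self]; exact hs0'
              · have h1 : s + (j:ℝ) * h ≤ min ((((j:ℕ) + 1 : ℕ)) * h : ℝ) L := by
                  apply le_min _ hle
                  push_cast; linarith
                rw [hc1]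
                linarith
            · rw [if_neg hjK]
              apply Set.indicator_of_notMem
              rintro ⟨h1, h2⟩
              have h3 : ¬ (s + (j:ℝ) * h ≤ L) := fun hc => hjK ((hcrit j).1 hc)
              push_neg at h3
              have h4 : a (j + 1) ≤ L := haL _
              linarith
          rw [Finset.sum_congr rfl hterm, ← Finset.sum_filter]
          congr 1
          ext j
          simp only [Finset.mem_filter, Finset.mem_range]
          omega
        rw [hsum]
        apply sum_lattice_le p T hp v hfin h hh0 s K hs0
        have hfl : ((⌊(L - s) / h⌋₊ : ℝ)) ≤ (L - s) / h := Nat.floor_le hdivnn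
        have : ((⌊(L - s) / h⌋₊ : ℝ)) * h ≤ L - s := by
          rw [← le_div_iff₀ hh0]; exact hfl
        push_cast [hKdef]
        simp only [hLdef] at this ⊢
        nlinarith
      · -- L < s : all terms vanish
        rw [Finset.sum_eq_zero]
        · exact hVp0
        intro j _
        apply Set.indicator_of_notMem
        rintro ⟨h1, h2⟩
        have h3 : a (j + 1) ≤ L := haL _
        have h4 : (0:ℝ) ≤ (j:ℝ) * h := by positivity
        linarith
  -- combine: the integral is at most h * Vp
  have hI : ∫ t in (0:ℝ)..L, f t ≤ h * Vp := by
    rw [step1, Finset.sum_congr rfl (fun j _ => step2 j), step3]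
    calc ∫ s in (0:ℝ)..h, ∑ j ∈ Finset.range N, e j s
        ≤ ∫ s in (0:ℝ)..h, Vp := by
          apply intervalIntegral.integral_mono_on hh0.le _ intervalIntegrable_const hpt
          have h1 := IntervalIntegrable.sum (Finset.range N) (fun j _ => hej_int j)
          have h2 : (∑ i ∈ Finset.range N, e i) = fun x => ∑ j ∈ Finset.range N, e j x := by
            ext x; simp [Finset.sum_apply]
          rwa [h2] at h1
      _ = h * Vp := by rw [intervalIntegral.integral_const]; simp [smul_eq_mul]
  -- finish
  have hInn : 0 ≤ ∫ t in (0:ℝ)..L, f t :=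
    intervalIntegral.integral_nonneg hL0.le (fun u _ => hfnn u)
  have hmain : (∫ t in (0:ℝ)..L, f t) ^ (1 / p) ≤ (h * Vp) ^ (1 / p) :=
    Real.rpow_le_rpow hInn hI (by positivity)
  have hVtrn : 0 ≤ V.toReal := ENNReal.toReal_nonneg
  have hVpeq : Vp ^ (1 / p) = V.toReal := by
    have h1 : Vp = V.toReal ^ p := by rw [hVpdef, ENNReal.toReal_rpow]
    rw [h1, ← Real.rpow_mul ENNReal.toReal_nonneg, mul_one_div_cancel hp0.ne', Real.rpow_one]
  calc (∫ t in (0:ℝ)..L, f t) ^ (1 / p) ≤ (h * Vp) ^ (1 / p) := hmain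
    _ = h ^ (1 / p) * Vp ^ (1 / p) := Real.mul_rpow hh0.le hVp0
    _ = h ^ (1 / p) * V.toReal := by rw [hVpeq]
    _ ≤ 2 ^ (1 + 1 / p) * h ^ (1 / p) * V.toReal := by
        rw [mul_assoc]
        apply le_mul_of_one_le_left (by positivity)
        exact Real.one_le_rpow one_le_two (by positivity)
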